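/- Let S and T be simple, locally finite hypergraphs and g an isomorphism from a connected component Γ_S(s) of Γ_S to a connected component Γ_T(t) of Γ_T with g(s) = t. Define f(v) by {f(v)} = g(x_s(v)) ⊕ g(y_s(v)). Then f is a bijection from the vertex set of S to the vertex set of T. -/

import Mathlib

open scoped symmDiff

variable {V : Type*}

def Indep (E : Set (Finset V)) (s : Set V) : Prop := ∀ e ∈ E, ¬ ((e : Set V) ⊆ s)

def SimpleHG (E : Set (Finset V)) : Prop :=
  (∀ e ∈ E, 1 < e.card) ∧ ∀ e ∈ E, ∀ e' ∈ E, e ⊆ e' → e = e'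

def LocFin (E : Set (Finset V)) : Prop := ∀ v : V, {e ∈ E | v ∈ e}.Finite

def Nbr (E : Set (Finset V)) (v w : V) : Prop := ∃ e ∈ E, v ∈ e ∧ w ∈ e

def Gamma (E : Set (Finset V)) : SimpleGraph {s : Set V // Indep E s} where
  Adj s t := ∃ v, s.1 ∆ t.1 = {v}
  symm := ⟨fun s t ⟨v, h⟩ => ⟨v, by rwa [symmDiff_comm]⟩⟩
  loopless := ⟨fun s ⟨v, h⟩ => by
    rw [symmDiff_self] at h
    exact absurd h.symm (Set.singleton_ne_empty v)⟩

def Comp (E : Set (Finset V)) (s : Set V) : Set {t : Set V // Indep E t} :=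
  {t | (s ∆ t.1).Finite}

def GammaComp (E : Set (Finset V)) (s : Set V) : SimpleGraph (Comp E s) :=
  (Gamma E).induce (Comp E s)

def xset (E : Set (Finset V)) (s : Set V) (v : V) : Set V :=
  s \ insert v {w | Nbr E v w}

def yset (E : Set (Finset V)) (s : Set V) (v : V) : Set V :=
  insert v (xset E s v)

def IsIsoHG {V W : Type*} (ES : Set (Finset V)) (ET : Set (Finset W)) (f : V → W) : Prop :=
  Function.Bijective f ∧ ∀ e : Finset V, e ∈ ES ↔ ∃ e' ∈ ET, (e' : Set W) = f '' (e : Set V)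

lemma sd_not_mem {α} (M : Set α) (v : α) (h : v ∉ M) : M ∆ {v} = insert v M := by
  ext x; by_cases hx : x = v <;> simp [Set.mem_symmDiff, hx] <;> tauto
lemma sd_mem {α} (M : Set α) (v : α) (h : v ∈ M) : M ∆ {v} = M \ {v} := by
  ext x; by_cases hx : x = v <;> simp [Set.mem_symmDiff, hx] <;> tauto
lemma sd_fin {α} {M N : Set α} (hM : M.Finite) (hN : N.Finite) : (M ∆ N).Finite :=
  (hM.union hN).subset (Set.symmDiff_subset_union)
lemma tog_mem {α} {M : Set α} (hM : M.Finite) {v : α} (h : v ∈ M) :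
    (M ∆ {v}).ncard + 1 = M.ncard := by
  rw [sd_mem _ _ h]; exact Set.ncard_diff_singleton_add_one h hM
lemma tog_not {α} {M : Set α} (hM : M.Finite) {v : α} (h : v ∉ M) :
    (M ∆ {v}).ncard = M.ncard + 1 := by
  rw [sd_not_mem _ _ h]; exact Set.ncard_insert_of_notMem h hM

lemma tog_fact {γ : Type*} {P : Set γ} (hP : P.Finite) (a : γ) :
    (a ∈ P ∧ (P ∆ {a}).ncard + 1 = P.ncard) ∨ (a ∉ P ∧ (P ∆ {a}).ncard = P.ncard + 1) := by
  by_cases ha : a ∈ P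
  · exact Or.inl ⟨ha, tog_mem hP ha⟩
  · exact Or.inr ⟨ha, tog_not hP ha⟩

lemma key {α β : Type*} {M : Set α} {N : Set β} (hM : M.Finite) (hN : N.Finite)
    {u v : α} {w w' : β}
    (h0 : M.ncard = N.ncard)
    (h1 : (M ∆ {u}).ncard = (N ∆ {w}).ncard)
    (h2 : (M ∆ {v}).ncard = (N ∆ {w'}).ncard)
    (h3 : (M ∆ {u} ∆ {v}).ncard = (N ∆ {w} ∆ {w'}).ncard) :
    (u = v ↔ w = w') := by
  have hMu : (M ∆ {u}).Finite := sd_fin hM (Set.finite_singleton u)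
  have hNw : (N ∆ {w}).Finite := sd_fin hN (Set.finite_singleton w)
  constructor
  · rintro rfl
    by_contra hww
    have e3 : (M ∆ {u} ∆ {u}).ncard = M.ncard := by
      rw [symmDiff_assoc, symmDiff_self, symmDiff_bot]
    have hw'N : w' ∈ N ∆ {w} ↔ w' ∈ N := by
      simp [Set.mem_symmDiff]; tauto
    rcases tog_fact (P := M) hM u with ⟨hu, eu⟩ | ⟨hu, eu⟩ <;>
      rcases tog_fact (P := N) hN w with ⟨hw, ew⟩ | ⟨hw, ew⟩ <;>
      rcases tog_fact (P := N) hN w' with ⟨hw2, ew2⟩ | ⟨hw2, ew2⟩ <;>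
      rcases tog_fact (P := N ∆ {w}) hNw w' with ⟨hw3, ew3⟩ | ⟨hw3, ew3⟩ <;>
      rw [hw'N] at hw3 <;> first | omega | (exfalso; tauto)
  · rintro rfl
    by_contra huv
    have e3 : (N ∆ {w} ∆ {w}).ncard = N.ncard := by
      rw [symmDiff_assoc, symmDiff_self, symmDiff_bot]
    have hvM : v ∈ M ∆ {u} ↔ v ∈ M := by
      simp [Set.mem_symmDiff]; tauto
    rcases tog_fact (P := N) hN w with ⟨hw, ew⟩ | ⟨hw, ew⟩ <;>
      rcases tog_fact (P := M) hM u with ⟨hu, eu⟩ | ⟨hu, eu⟩ <;>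
      rcases tog_fact (P := M) hM v with ⟨hv, ev⟩ | ⟨hv, ev⟩ <;>
      rcases tog_fact (P := M ∆ {u}) hMu v with ⟨hv3, ev3⟩ | ⟨hv3, ev3⟩ <;>
      rw [hvM] at hv3 <;> first | omega | (exfalso; tauto)

lemma indep_subset {E : Set (Finset V)} {s u : Set V} (h : Indep E s) (hsub : u ⊆ s) :
    Indep E u := fun e he hc => h e he (hc.trans hsub)

lemma comp_sd_fin {E : Set (Finset V)} {s : Set V} {p q : {u : Set V // Indep E u}}
    (hp : p ∈ Comp E s) (hq : q ∈ Comp E s) : (p.1 ∆ q.1).Finite := by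
  have h := symmDiff_triangle p.1 s q.1
  rw [symmDiff_comm p.1 s] at h
  exact (hp.union hq).subset h

lemma walk_le {E : Set (Finset V)} {s : Set V} {p q : Comp E s}
    (W : (GammaComp E s).Walk p q) : (p.1.1 ∆ q.1.1).ncard ≤ W.length := by
  induction W with
  | nil => simp [symmDiff_self, Set.bot_eq_empty]
  | @cons a b c h W ih =>
    have h' : ∃ x, a.1.1 ∆ b.1.1 = {x} := h
    obtain ⟨x, hx⟩ := h'
    have hsub : a.1.1 ∆ c.1.1 ⊆ (a.1.1 ∆ b.1.1) ∪ (b.1.1 ∆ c.1.1) :=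
      symmDiff_triangle a.1.1 b.1.1 c.1.1
    have hfin : ((a.1.1 ∆ b.1.1) ∪ (b.1.1 ∆ c.1.1)).Finite := by
      rw [hx]; exact (Set.finite_singleton x).union (comp_sd_fin b.2 c.2)
    calc (a.1.1 ∆ c.1.1).ncard ≤ ((a.1.1 ∆ b.1.1) ∪ (b.1.1 ∆ c.1.1)).ncard :=
          Set.ncard_le_ncard hsub hfin
      _ ≤ (a.1.1 ∆ b.1.1).ncard + (b.1.1 ∆ c.1.1).ncard := Set.ncard_union_le _ _
      _ ≤ 1 + W.length := by rw [hx]; simp; exact ih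
      _ = W.length + 1 := by omega

lemma walk_exists {E : Set (Finset V)} {s : Set V} (q : Comp E s) :
    ∀ (n : ℕ) (p : Comp E s), (p.1.1 ∆ q.1.1).ncard ≤ n →
      ∃ W : (GammaComp E s).Walk p q, W.length ≤ n := by
  intro n
  induction n with
  | zero =>
    intro p hp
    have hfin := comp_sd_fin p.2 q.2
    have h0 : p.1.1 ∆ q.1.1 = ∅ := by
      rw [← Set.ncard_eq_zero hfin]; omega
    have : p = q := Subtype.ext (Subtype.ext (by
      rw [← symmDiff_eq_bot, Set.bot_eq_empty]; exact h0))
    subst this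
    exact ⟨SimpleGraph.Walk.nil, by simp⟩
  | succ n ih =>
    intro p hp
    by_cases hpq : p.1.1 = q.1.1
    · have : p = q := Subtype.ext (Subtype.ext hpq)
      subst this
      exact ⟨SimpleGraph.Walk.nil, by simp⟩
    · have hfin := comp_sd_fin p.2 q.2
      have hne : (p.1.1 ∆ q.1.1).Nonempty := by
        rw [Set.nonempty_iff_ne_empty]
        intro h
        exact hpq (by rw [← symmDiff_eq_bot, Set.bot_eq_empty]; exact h)
      -- pick element and build next set
      obtain ⟨v, hvP, hP'1, hP'2⟩ :
          ∃ v, ∃ (hI : Indep E (p.1.1 ∆ {v})) (hC : (⟨p.1.1 ∆ {v}, hI⟩ : {u : Set V // Indep E u}) ∈ Comp E s),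
            v ∈ p.1.1 ∆ q.1.1 := by
        by_cases hd : (p.1.1 \ q.1.1).Nonempty
        · obtain ⟨v, hv⟩ := hd
          have hmem : v ∈ p.1.1 := hv.1
          have heq : p.1.1 ∆ {v} = p.1.1 \ {v} := sd_mem _ _ hmem
          have hI : Indep E (p.1.1 ∆ {v}) := by
            rw [heq]; exact indep_subset p.1.2 Set.diff_subset
          refine ⟨v, hI, ?_, Or.inl ⟨hv.1, hv.2⟩⟩
          show (s ∆ (p.1.1 ∆ {v})).Finite
          have h := symmDiff_triangle s p.1.1 (p.1.1 ∆ {v})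
          rw [symmDiff_symmDiff_cancel_left] at h
          exact ((p.2.union (Set.finite_singleton v)).subset h)
        · rw [Set.not_nonempty_iff_eq_empty, Set.diff_eq_empty] at hd
          obtain ⟨v, hv⟩ := hne
          have hv' : v ∈ q.1.1 ∧ v ∉ p.1.1 := by
            rcases hv with h | h
            · exact absurd h.1 (fun hh => h.2 (hd hh))
            · exact h
          have heq : p.1.1 ∆ {v} = insert v p.1.1 := sd_not_mem _ _ hv'.2
          have hI : Indep E (p.1.1 ∆ {v}) := by
            rw [heq]
            exact indep_subset q.1.2 (Set.insert_subset hv'.1 hd)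
          refine ⟨v, hI, ?_, Or.inr hv'⟩
          show (s ∆ (p.1.1 ∆ {v})).Finite
          have h := symmDiff_triangle s p.1.1 (p.1.1 ∆ {v})
          rw [symmDiff_symmDiff_cancel_left] at h
          exact ((p.2.union (Set.finite_singleton v)).subset h)
      set p' : Comp E s := ⟨⟨p.1.1 ∆ {v}, hvP⟩, hP'1⟩ with hp'
      have hadj : (GammaComp E s).Adj p p' := by
        show ∃ x, p.1.1 ∆ (p.1.1 ∆ {v}) = {x}
        exact ⟨v, symmDiff_symmDiff_cancel_left _ _⟩
      have hstep : (p'.1.1 ∆ q.1.1).ncard ≤ n := by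
        have heq2 : p'.1.1 ∆ q.1.1 = (p.1.1 ∆ q.1.1) \ {v} := by
          show (p.1.1 ∆ {v}) ∆ q.1.1 = (p.1.1 ∆ q.1.1) \ {v}
          rw [← sd_mem (p.1.1 ∆ q.1.1) v hP'2]
          rw [symmDiff_right_comm]
        rw [heq2]
        have := Set.ncard_diff_singleton_add_one hP'2 hfin
        omega
      obtain ⟨W, hW⟩ := ih p' hstep
      exact ⟨SimpleGraph.Walk.cons hadj W, by simp; omega⟩

lemma iso_sd_le {VS VT : Type*} {ES : Set (Finset VS)} {ET : Set (Finset VT)}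
    {s : Set VS} {t : Set VT} (g : GammaComp ES s ≃g GammaComp ET t) (p q : Comp ES s) :
    ((g p).1.1 ∆ (g q).1.1).ncard ≤ (p.1.1 ∆ q.1.1).ncard := by
  obtain ⟨W, hW⟩ := walk_exists q _ p le_rfl
  have h := walk_le (W.map g.toEmbedding.toHom)
  rw [SimpleGraph.Walk.length_map] at h
  exact h.trans hW

lemma iso_sd_eq {VS VT : Type*} {ES : Set (Finset VS)} {ET : Set (Finset VT)}
    {s : Set VS} {t : Set VT} (g : GammaComp ES s ≃g GammaComp ET t) (p q : Comp ES s) :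
    ((g p).1.1 ∆ (g q).1.1).ncard = (p.1.1 ∆ q.1.1).ncard := by
  refine le_antisymm (iso_sd_le g p q) ?_
  have h := iso_sd_le g.symm (g p) (g q)
  rwa [g.symm_apply_apply, g.symm_apply_apply] at h

lemma nbr_fin {E : Set (Finset V)} (hlf : LocFin E) (v : V) : {w | Nbr E v w}.Finite := by
  have hsub : {w | Nbr E v w} ⊆ ⋃ e ∈ {e ∈ E | v ∈ e}, (e : Set V) := by
    rintro w ⟨e, he, hve, hwe⟩
    exact Set.mem_biUnion ⟨he, hve⟩ hwe
  exact (Set.Finite.biUnion (hlf v) (fun e _ => e.finite_toSet)).subset hsub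

lemma v_not_mem_xset {E : Set (Finset V)} {s : Set V} (v : V) : v ∉ xset E s v :=
  fun h => h.2 (Set.mem_insert v _)

lemma xset_indep {E : Set (Finset V)} {s : Set V} (hs : Indep E s) (v : V) :
    Indep E (xset E s v) := indep_subset hs Set.diff_subset

lemma yset_indep {E : Set (Finset V)} {s : Set V} (hcard : ∀ e ∈ E, 1 < e.card)
    (hs : Indep E s) (v : V) : Indep E (yset E s v) := by
  intro e he hsub
  by_cases hv : v ∈ e
  · obtain ⟨w, hw, hwv⟩ : ∃ w ∈ e, w ≠ v := by
      have := Finset.exists_mem_ne (hcard e he) v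
      simpa using this
    have hmem : (w : V) ∈ yset E s v := hsub (by exact_mod_cast hw)
    rcases hmem with h | h
    · exact hwv h
    · exact h.2 (Set.mem_insert_iff.2 (Or.inr ⟨e, he, hv, by exact_mod_cast hw⟩))
  · refine hs e he (fun x hx => ?_)
    rcases hsub hx with h | h
    · exact absurd (h ▸ hx) hv
    · exact h.1

lemma xset_sd_fin {E : Set (Finset V)} {s : Set V} (hlf : LocFin E) (v : V) :
    (s ∆ xset E s v).Finite := by
  have hsub : s ∆ xset E s v ⊆ insert v {w | Nbr E v w} := by
    intro x hx
    rcases Set.mem_symmDiff.1 hx with ⟨hxs, hxn⟩ | ⟨hxn, hxs⟩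
    · by_contra hc
      exact hxn ⟨hxs, hc⟩
    · exact absurd hxn.1 hxs
  exact ((nbr_fin hlf v).insert v).subset hsub

lemma yset_sd_fin {E : Set (Finset V)} {s : Set V} (hlf : LocFin E) (v : V) :
    (s ∆ yset E s v).Finite := by
  have hsub : s ∆ yset E s v ⊆ insert v (s ∆ xset E s v) := by
    intro x
    simp only [yset, Set.mem_symmDiff, Set.mem_insert_iff]
    tauto
  exact ((xset_sd_fin hlf v).insert v).subset hsub

lemma sd_swap {α : Type*} (a b c d : Set α) : (a ∆ b) ∆ c ∆ d = (a ∆ c) ∆ (b ∆ d) := by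
  rw [symmDiff_right_comm a b c, symmDiff_assoc]

lemma yset_eq_sd {E : Set (Finset V)} {s : Set V} (v : V) :
    yset E s v = xset E s v ∆ {v} := (sd_not_mem _ _ (v_not_mem_xset v)).symm

theorem stmt3 {VS VT : Type*} (ES : Set (Finset VS)) (ET : Set (Finset VT))
    (hSsimp : SimpleHG ES) (hTsimp : SimpleHG ET) (hSlf : LocFin ES) (hTlf : LocFin ET)
    (s : Set VS) (t : Set VT) (hs : Indep ES s) (ht : Indep ET t)
    (g : GammaComp ES s ≃g GammaComp ET t)
    (hsC : (⟨s, hs⟩ : {u : Set VS // Indep ES u}) ∈ Comp ES s)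
    (hgst : (g ⟨⟨s, hs⟩, hsC⟩).1.1 = t)
    (f : VS → VT)
    (hf : ∀ (v : VS) (hxI : Indep ES (xset ES s v)) (hyI : Indep ES (yset ES s v))
      (hxC : (⟨xset ES s v, hxI⟩ : {u : Set VS // Indep ES u}) ∈ Comp ES s)
      (hyC : (⟨yset ES s v, hyI⟩ : {u : Set VS // Indep ES u}) ∈ Comp ES s),
      (g ⟨⟨xset ES s v, hxI⟩, hxC⟩).1.1 ∆ (g ⟨⟨yset ES s v, hyI⟩, hyC⟩).1.1 = {f v}) :
    Function.Bijective f := by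
  classical
  have hxI : ∀ v, Indep ES (xset ES s v) := fun v => xset_indep hs v
  have hyI : ∀ v, Indep ES (yset ES s v) := fun v => yset_indep hSsimp.1 hs v
  have hxC : ∀ v, (⟨xset ES s v, hxI v⟩ : {u : Set VS // Indep ES u}) ∈ Comp ES s :=
    fun v => xset_sd_fin hSlf v
  have hyC : ∀ v, (⟨yset ES s v, hyI v⟩ : {u : Set VS // Indep ES u}) ∈ Comp ES s :=
    fun v => yset_sd_fin hSlf v
  let X : VS → Comp ES s := fun v => ⟨⟨xset ES s v, hxI v⟩, hxC v⟩
  let Y : VS → Comp ES s := fun v => ⟨⟨yset ES s v, hyI v⟩, hyC v⟩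
  have hfv : ∀ v, (g (X v)).1.1 ∆ (g (Y v)).1.1 = {f v} := fun v => hf v _ _ _ _
  have hgYX : ∀ v, (g (Y v)).1.1 = (g (X v)).1.1 ∆ {f v} := fun v => by
    rw [← hfv v, symmDiff_symmDiff_cancel_left]
  have isoeq : ∀ p q : Comp ES s, ((g p).1.1 ∆ (g q).1.1).ncard = (p.1.1 ∆ q.1.1).ncard :=
    fun p q => iso_sd_eq g p q
  constructor
  · -- injectivity
    intro u v huv
    have hMfin : (xset ES s u ∆ xset ES s v).Finite := comp_sd_fin (hxC u) (hxC v)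
    have hNfin : ((g (X u)).1.1 ∆ (g (X v)).1.1).Finite := comp_sd_fin (g (X u)).2 (g (X v)).2
    have h0 : (xset ES s u ∆ xset ES s v).ncard = ((g (X u)).1.1 ∆ (g (X v)).1.1).ncard :=
      (isoeq (X u) (X v)).symm
    have h1 : ((xset ES s u ∆ xset ES s v) ∆ {u}).ncard
        = (((g (X u)).1.1 ∆ (g (X v)).1.1) ∆ {f u}).ncard := by
      have e1 : (xset ES s u ∆ xset ES s v) ∆ {u} = yset ES s u ∆ xset ES s v := by
        rw [yset_eq_sd, symmDiff_right_comm]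
      have e2 : ((g (X u)).1.1 ∆ (g (X v)).1.1) ∆ {f u} = (g (Y u)).1.1 ∆ (g (X v)).1.1 := by
        rw [hgYX u, symmDiff_right_comm]
      rw [e1, e2]
      exact (isoeq (Y u) (X v)).symm
    have h2 : ((xset ES s u ∆ xset ES s v) ∆ {v}).ncard
        = (((g (X u)).1.1 ∆ (g (X v)).1.1) ∆ {f v}).ncard := by
      have e1 : (xset ES s u ∆ xset ES s v) ∆ {v} = xset ES s u ∆ yset ES s v := by
        rw [yset_eq_sd, symmDiff_assoc]
      have e2 : ((g (X u)).1.1 ∆ (g (X v)).1.1) ∆ {f v} = (g (X u)).1.1 ∆ (g (Y v)).1.1 := by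
        rw [hgYX v, symmDiff_assoc]
      rw [e1, e2]
      exact (isoeq (X u) (Y v)).symm
    have h3 : ((xset ES s u ∆ xset ES s v) ∆ {u} ∆ {v}).ncard
        = (((g (X u)).1.1 ∆ (g (X v)).1.1) ∆ {f u} ∆ {f v}).ncard := by
      have e1 : (xset ES s u ∆ xset ES s v) ∆ {u} ∆ {v} = yset ES s u ∆ yset ES s v := by
        rw [yset_eq_sd, yset_eq_sd]
        exact sd_swap _ _ _ _
      have e2 : ((g (X u)).1.1 ∆ (g (X v)).1.1) ∆ {f u} ∆ {f v}
          = (g (Y u)).1.1 ∆ (g (Y v)).1.1 := by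
        rw [hgYX u, hgYX v]
        exact sd_swap _ _ _ _
      rw [e1, e2]
      exact (isoeq (Y u) (Y v)).symm
    exact (key hMfin hNfin h0 h1 h2 h3).2 huv
  · -- surjectivity
    intro w
    have hxIT : Indep ET (xset ET t w) := xset_indep ht w
    have hyIT : Indep ET (yset ET t w) := yset_indep hTsimp.1 ht w
    have hxCT : (⟨xset ET t w, hxIT⟩ : {u : Set VT // Indep ET u}) ∈ Comp ET t :=
      xset_sd_fin hTlf w
    have hyCT : (⟨yset ET t w, hyIT⟩ : {u : Set VT // Indep ET u}) ∈ Comp ET t :=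
      yset_sd_fin hTlf w
    let XT : Comp ET t := ⟨⟨xset ET t w, hxIT⟩, hxCT⟩
    let YT : Comp ET t := ⟨⟨yset ET t w, hyIT⟩, hyCT⟩
    have hadjT : (GammaComp ET t).Adj XT YT := by
      refine ⟨w, ?_⟩
      show xset ET t w ∆ yset ET t w = {w}
      rw [yset_eq_sd, symmDiff_symmDiff_cancel_left]
    have hadjS : (GammaComp ES s).Adj (g.symm XT) (g.symm YT) := g.symm.map_adj_iff.2 hadjT
    have hadjS' : ∃ v, (g.symm XT).1.1 ∆ (g.symm YT).1.1 = {v} := hadjS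
    obtain ⟨v, hAB⟩ := hadjS' 
    refine ⟨v, ?_⟩
    have hgA : g (g.symm XT) = XT := g.apply_symm_apply XT
    have hgB : g (g.symm YT) = YT := g.apply_symm_apply YT
    have hBA : (g.symm YT).1.1 = (g.symm XT).1.1 ∆ {v} := by
      rw [← hAB, symmDiff_symmDiff_cancel_left]
    have hMfin : (xset ES s v ∆ (g.symm XT).1.1).Finite := comp_sd_fin (hxC v) (g.symm XT).2
    have hNfin : ((g (X v)).1.1 ∆ xset ET t w).Finite := comp_sd_fin (g (X v)).2 hxCT
    have h0 : (xset ES s v ∆ (g.symm XT).1.1).ncard = ((g (X v)).1.1 ∆ xset ET t w).ncard := by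
      have := isoeq (X v) (g.symm XT)
      rw [hgA] at this
      exact this.symm
    have h1 : ((xset ES s v ∆ (g.symm XT).1.1) ∆ {v}).ncard
        = (((g (X v)).1.1 ∆ xset ET t w) ∆ {f v}).ncard := by
      have e1 : (xset ES s v ∆ (g.symm XT).1.1) ∆ {v} = yset ES s v ∆ (g.symm XT).1.1 := by
        rw [yset_eq_sd, symmDiff_right_comm]
      have e2 : ((g (X v)).1.1 ∆ xset ET t w) ∆ {f v} = (g (Y v)).1.1 ∆ xset ET t w := by
        rw [hgYX v, symmDiff_right_comm]
      rw [e1, e2]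
      have := isoeq (Y v) (g.symm XT)
      rw [hgA] at this
      exact this.symm
    have h2 : ((xset ES s v ∆ (g.symm XT).1.1) ∆ {v}).ncard
        = (((g (X v)).1.1 ∆ xset ET t w) ∆ {w}).ncard := by
      have e1 : (xset ES s v ∆ (g.symm XT).1.1) ∆ {v} = xset ES s v ∆ (g.symm YT).1.1 := by
        rw [hBA, symmDiff_assoc]
      have e2 : ((g (X v)).1.1 ∆ xset ET t w) ∆ {w} = (g (X v)).1.1 ∆ yset ET t w := by
        rw [yset_eq_sd (E := ET) (s := t) w, symmDiff_assoc]
      rw [e1, e2]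
      have := isoeq (X v) (g.symm YT)
      rw [hgB] at this
      exact this.symm
    have h3 : ((xset ES s v ∆ (g.symm XT).1.1) ∆ {v} ∆ {v}).ncard
        = (((g (X v)).1.1 ∆ xset ET t w) ∆ {f v} ∆ {w}).ncard := by
      have e1 : (xset ES s v ∆ (g.symm XT).1.1) ∆ {v} ∆ {v} = yset ES s v ∆ (g.symm YT).1.1 := by
        rw [yset_eq_sd, hBA]
        exact sd_swap _ _ _ _
      have e2 : ((g (X v)).1.1 ∆ xset ET t w) ∆ {f v} ∆ {w} = (g (Y v)).1.1 ∆ yset ET t w := by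
        rw [hgYX v, yset_eq_sd (E := ET) (s := t) w]
        exact sd_swap _ _ _ _
      rw [e1, e2]
      have := isoeq (Y v) (g.symm YT)
      rw [hgB] at this
      exact this.symm
    exact (key hMfin hNfin h0 h1 h2 h3).1 rfl
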